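/- Fix nonzero real numbers α₁, α₂. Then: (i) there is a constant C > 0 such that for every n and every set E of n points in ℝ², the number of ordered triples (x₁, x₂, x₃) of pairwise distinct points of E with x₁ · x₂ = α₁ and x₂ · x₃ = α₂ is at most C · n²; and (ii) there exist a constant c > 0 and N such that for every n > N there is a set E of n points in ℝ² containing at least c · n² such triples. That is, the maximum number of dot product hinges of type (α₁, α₂) in an n-point planar set is ≈ n². -/

import Mathlib

open scoped InnerProductSpace

noncomputable section

/-- Points in the plane. -/
abbrev Pt2 : Type := EuclideanSpace ℝ (Fin 2)

/-- The set of dot product hinges (2-chains) of type `(α₁, α₂)` in a point set `E`: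
ordered triples `(x₁, x₂, x₃)` of pairwise distinct points of `E` with `x₁ ⬝ x₂ = α₁`
and `x₂ ⬝ x₃ = α₂`. -/
def dpHinges (E : Finset Pt2) (α₁ α₂ : ℝ) : Set (Pt2 × Pt2 × Pt2) :=
  {x | x.1 ∈ E ∧ x.2.1 ∈ E ∧ x.2.2 ∈ E ∧
    x.1 ≠ x.2.1 ∧ x.1 ≠ x.2.2 ∧ x.2.1 ≠ x.2.2 ∧
    ⟪x.1, x.2.1⟫_ℝ = α₁ ∧ ⟪x.2.1, x.2.2⟫_ℝ = α₂}

noncomputable def pt (a b : ℝ) : Pt2 := WithLp.toLp 2 ![a, b]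

lemma inner2 (x y : Pt2) : ⟪x, y⟫_ℝ = x 0 * y 0 + x 1 * y 1 := by
  simp [PiLp.inner_apply, Fin.sum_univ_two, RCLike.inner_apply]
  ring

lemma pt_apply0 (a b : ℝ) : pt a b 0 = a := rfl
lemma pt_apply1 (a b : ℝ) : pt a b 1 = b := rfl

lemma key_unique (α₁ α₂ : ℝ) (h₁ : α₁ ≠ 0)
    (x₁ x₂ x₂' x₃ : Pt2)
    (e1 : ⟪x₁, x₂⟫_ℝ = α₁) (e1' : ⟪x₁, x₂'⟫_ℝ = α₁)
    (e2 : ⟪x₂, x₃⟫_ℝ = α₂) (e2' : ⟪x₂', x₃⟫_ℝ = α₂)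
    (hx : x₃ ≠ (α₂ / α₁) • x₁) : x₂ = x₂' := by
  by_contra hne
  rw [inner2] at e1 e1' e2 e2'
  have E1 : x₁ 0 * (x₂ 0 - x₂' 0) + x₁ 1 * (x₂ 1 - x₂' 1) = 0 := by
    linear_combination e1 - e1'
  have E2 : x₃ 0 * (x₂ 0 - x₂' 0) + x₃ 1 * (x₂ 1 - x₂' 1) = 0 := by
    linear_combination e2 - e2'
  have hv : x₂ 0 - x₂' 0 ≠ 0 ∨ x₂ 1 - x₂' 1 ≠ 0 := by
    by_contra h
    push_neg at h
    apply hne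
    ext i
    fin_cases i
    · show x₂ 0 = x₂' 0; linarith [h.1]
    · show x₂ 1 = x₂' 1; linarith [h.2]
  have hdet : x₁ 0 * x₃ 1 - x₁ 1 * x₃ 0 = 0 := by
    rcases hv with hv | hv
    · have : (x₁ 0 * x₃ 1 - x₁ 1 * x₃ 0) * (x₂ 0 - x₂' 0) = 0 := by
        linear_combination x₃ 1 * E1 - x₁ 1 * E2
      exact (mul_eq_zero.mp this).resolve_right hv
    · have : (x₁ 0 * x₃ 1 - x₁ 1 * x₃ 0) * (x₂ 1 - x₂' 1) = 0 := by
        linear_combination x₁ 0 * E2 - x₃ 0 * E1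
      exact (mul_eq_zero.mp this).resolve_right hv
  have hb0 : α₁ * x₃ 0 = α₂ * x₁ 0 := by
    linear_combination (-(x₃ 0)) * e1 + (x₁ 0) * e2 - (x₂ 1) * hdet
  have hb1 : α₁ * x₃ 1 = α₂ * x₁ 1 := by
    linear_combination (-(x₃ 1)) * e1 + (x₁ 1) * e2 + (x₂ 0) * hdet
  apply hx
  ext i
  fin_cases i
  · show x₃ 0 = (α₂ / α₁) * x₁ 0
    field_simp
    linarith
  · show x₃ 1 = (α₂ / α₁) * x₁ 1
    field_simp
    linarith

/-- **dot product hinges.** Fix nonzero reals `α₁, α₂`.  (i) There is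
`C > 0` such that every set of `n` points in the plane contains at most `C · n²` dot
product hinges of type `(α₁, α₂)`; (ii) there are `c > 0` and `N` such that for every
`n > N` some set of `n` points in the plane contains at least `c · n²` of them.  That
is, the maximum number of dot product hinges of type `(α₁, α₂)` is `≈ n²`. -/
theorem dotProduct_hinge_bounds (α₁ α₂ : ℝ) (h₁ : α₁ ≠ 0) (h₂ : α₂ ≠ 0) :
    (∃ C : ℝ, 0 < C ∧ ∀ (n : ℕ) (E : Finset Pt2), E.card = n →
      ((dpHinges E α₁ α₂).ncard : ℝ) ≤ C * (n : ℝ) ^ 2) ∧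
    (∃ c : ℝ, 0 < c ∧ ∃ N : ℕ, ∀ n : ℕ, N < n →
      ∃ E : Finset Pt2, E.card = n ∧
        c * (n : ℝ) ^ 2 ≤ ((dpHinges E α₁ α₂).ncard : ℝ)) := by
  classical
  constructor
  · -- upper bound
    refine ⟨2, by norm_num, ?_⟩
    intro n E hE
    set T : Finset (Pt2 × Pt2 × Pt2) := (E ×ˢ E ×ˢ E).filter
        (fun x => x.1 ≠ x.2.1 ∧ x.1 ≠ x.2.2 ∧ x.2.1 ≠ x.2.2 ∧
          ⟪x.1, x.2.1⟫_ℝ = α₁ ∧ ⟪x.2.1, x.2.2⟫_ℝ = α₂) with hT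
    have hset : dpHinges E α₁ α₂ = ↑T := by
      ext x
      simp only [dpHinges, Set.mem_setOf_eq, hT, Finset.coe_filter, Finset.mem_product,
        Set.mem_setOf_eq]
      tauto
    rw [hset, Set.ncard_coe_finset]
    have hsplit := Finset.card_filter_add_card_filter_not
      (s := T) (p := fun x => x.2.2 = (α₂ / α₁) • x.1)
    have hc1 : (T.filter (fun x => x.2.2 = (α₂ / α₁) • x.1)).card ≤ (E ×ˢ E).card := by
      apply Finset.card_le_card_of_injOn (fun x => (x.1, x.2.1))
      · intro x hx
        simp only [Finset.mem_coe, Finset.mem_filter, hT, Finset.mem_product] at hx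
        simp [hx.1.1.1, hx.1.1.2.1]
      · intro x hx y hy hxy
        obtain ⟨x1, x2, x3⟩ := x
        obtain ⟨y1, y2, y3⟩ := y
        simp only [Finset.mem_coe, Finset.mem_filter, hT, Finset.mem_product] at hx hy
        simp only [Prod.mk.injEq] at hxy ⊢
        refine ⟨hxy.1, hxy.2, ?_⟩
        rw [hx.2, hy.2, hxy.1]
    have hc2 : (T.filter (fun x => ¬ x.2.2 = (α₂ / α₁) • x.1)).card ≤ (E ×ˢ E).card := by
      apply Finset.card_le_card_of_injOn (fun x => (x.1, x.2.2))
      · intro x hx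
        simp only [Finset.mem_coe, Finset.mem_filter, hT, Finset.mem_product] at hx
        simp [hx.1.1.1, hx.1.1.2.2]
      · intro x hx y hy hxy
        obtain ⟨x1, x2, x3⟩ := x
        obtain ⟨y1, y2, y3⟩ := y
        simp only [Finset.mem_coe, Finset.mem_filter, hT, Finset.mem_product] at hx hy
        simp only [Prod.mk.injEq] at hxy ⊢
        obtain ⟨hxy1, hxy3⟩ := hxy
        refine ⟨hxy1, ?_, hxy3⟩
        subst hxy1; subst hxy3
        exact key_unique α₁ α₂ h₁ x1 x2 y2 x3 hx.1.2.2.2.2.1 hy.1.2.2.2.2.1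
          hx.1.2.2.2.2.2 hy.1.2.2.2.2.2 hx.2
    have hcard : T.card ≤ 2 * (n * n) := by
      have hEE : (E ×ˢ E).card = n * n := by simp [Finset.card_product, hE]
      omega
    calc (T.card : ℝ) ≤ ((2 * (n * n) : ℕ) : ℝ) := by exact_mod_cast hcard
      _ = 2 * (n : ℝ) ^ 2 := by push_cast; ring
  · -- lower bound
    refine ⟨1 / 16, by norm_num, 3, ?_⟩
    intro n hn
    set m := (n - 1) / 2 with hm
    have hm1 : 1 ≤ m := by omega
    have h4m : n ≤ 4 * m := by omega
    have h2mn : 2 * m < n := by omega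
    set f : ℕ → Pt2 := fun k =>
      pt (if k = 0 then 1 else if k ≤ m then α₁ else if k ≤ 2 * m then α₂ else 1) k with hf
    have hfinj : Function.Injective f := by
      intro a b hab
      have : ((a : ℝ)) = b := by simpa [hf, pt] using congrFun (congrArg WithLp.ofLp hab) 1
      exact_mod_cast this
    refine ⟨(Finset.range n).image f, ?_, ?_⟩
    · rw [Finset.card_image_of_injective _ hfinj, Finset.card_range]
    · set E := (Finset.range n).image f with hEdef
      set g : ℕ × ℕ → Pt2 × Pt2 × Pt2 := fun p => (f (p.1 + 1), f 0, f (m + p.2 + 1)) with hg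
      set D := Finset.range m ×ˢ Finset.range m with hD
      have hmem : ∀ p ∈ D, g p ∈ dpHinges E α₁ α₂ := by
        intro p hp
        simp only [hD, Finset.mem_product, Finset.mem_range] at hp
        obtain ⟨hp1, hp2⟩ := hp
        have hv1 : f (p.1 + 1) = pt α₁ ((p.1 + 1 : ℕ) : ℝ) := by
          simp only [hf]
          rw [if_neg (by omega), if_pos (by omega)]
        have hv2 : f 0 = pt 1 ((0 : ℕ) : ℝ) := by
          simp [hf]
        have hv3 : f (m + p.2 + 1) = pt α₂ ((m + p.2 + 1 : ℕ) : ℝ) := by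
          simp only [hf]
          rw [if_neg (by omega), if_neg (by omega), if_pos (by omega)]
        have mem1 : f (p.1 + 1) ∈ E := Finset.mem_image_of_mem f (Finset.mem_range.mpr (by omega))
        have mem2 : f 0 ∈ E := Finset.mem_image_of_mem f (Finset.mem_range.mpr (by omega))
        have mem3 : f (m + p.2 + 1) ∈ E :=
          Finset.mem_image_of_mem f (Finset.mem_range.mpr (by omega))
        have ne1 : f (p.1 + 1) ≠ f 0 := fun h => by have := hfinj h; omega
        have ne2 : f (p.1 + 1) ≠ f (m + p.2 + 1) := fun h => by have := hfinj h; omega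
        have ne3 : f 0 ≠ f (m + p.2 + 1) := fun h => by have := hfinj h; omega
        have ip1 : ⟪f (p.1 + 1), f 0⟫_ℝ = α₁ := by
          rw [hv1, hv2, inner2, pt_apply0, pt_apply0, pt_apply1, pt_apply1]
          push_cast
          ring
        have ip2 : ⟪f 0, f (m + p.2 + 1)⟫_ℝ = α₂ := by
          rw [hv2, hv3, inner2, pt_apply0, pt_apply0, pt_apply1, pt_apply1]
          push_cast
          ring
        exact ⟨mem1, mem2, mem3, ne1, ne2, ne3, ip1, ip2⟩
      have hginj : Set.InjOn g D := by
        intro p _ q _ hpq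
        simp only [hg, Prod.mk.injEq] at hpq
        have e1 : p.1 + 1 = q.1 + 1 := hfinj hpq.1
        have e2 : m + p.2 + 1 = m + q.2 + 1 := hfinj hpq.2.2
        exact Prod.ext (by omega) (by omega)
      have hfin : (dpHinges E α₁ α₂).Finite := by
        apply Set.Finite.subset ((E ×ˢ E ×ˢ E) : Finset _).finite_toSet
        intro x hx
        simp only [Finset.coe_product, Set.mem_prod]
        exact ⟨hx.1, hx.2.1, hx.2.2.1⟩
      have hsub : ↑(D.image g) ⊆ dpHinges E α₁ α₂ := by
        intro x hx
        simp only [Finset.coe_image, Set.mem_image, Finset.mem_coe] at hx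
        obtain ⟨p, hp, rfl⟩ := hx
        exact hmem p hp
      have hle : (D.image g).card ≤ (dpHinges E α₁ α₂).ncard := by
        rw [← Set.ncard_coe_finset]
        exact Set.ncard_le_ncard hsub hfin
      have hDcard : (D.image g).card = m * m := by
        rw [Finset.card_image_of_injOn hginj]
        simp [hD]
      have hmr : (n : ℝ) ≤ 4 * (m : ℝ) := by exact_mod_cast h4m
      have hfinal : ((m : ℝ) * m) ≤ ((dpHinges E α₁ α₂).ncard : ℝ) := by
        have := hDcard ▸ hle
        exact_mod_cast this
      nlinarith [hfinal, hmr, Nat.cast_nonneg (α := ℝ) n,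
        mul_nonneg (by linarith : (0:ℝ) ≤ 4*(m:ℝ) - n) (by positivity : (0:ℝ) ≤ 4*(m:ℝ) + n)]
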